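/- Let n, N be positive natural numbers, A a real n × n matrix, B a real n × N matrix, and T > 0. Suppose the reachability Gramian W = ∫₀ᵀ exp(tA)·B·Bᵀ·exp(tAᵀ) dt is invertible. Then for every continuous control u : ℝ → ℝ^N and target state x* ∈ ℝ^n satisfying ∫₀ᵀ exp((T−s)A)·B·u(s) ds = x*, the control energy satisfies ∫₀ᵀ ‖u(s)‖² ds ≥ ⟨x*, W⁻¹·x*⟩. -/

import Mathlib

open Matrix

attribute [local instance] Matrix.normedAddCommGroup Matrix.normedSpace

/-- Evaluation of an interval integral of a pi-type-valued function. -/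
lemma iint_pi_apply {ι : Type*} [Fintype ι] {f : ℝ → ι → ℝ} {a b : ℝ}
    (hf : IntervalIntegrable f MeasureTheory.volume a b) (i : ι) :
    (∫ s in a..b, f s) i = ∫ s in a..b, f s i :=
  ((ContinuousLinearMap.proj (R := ℝ) (φ := fun _ : ι => ℝ) i).intervalIntegral_comp_comm
    hf).symm

/-- **Gramian lower bound on the control energy.**
For the linear system `ẋ = Ax + Bu` with invertible reachability Gramian
`W = ∫₀ᵀ e^{tA} B Bᵀ e^{tAᵀ} dt`, every continuous control `u` steering the origin to
`x*` at time `T` (i.e. `∫₀ᵀ e^{(T−s)A} B u(s) ds = x*`) has energy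
`∫₀ᵀ ‖u(s)‖² ds ≥ ⟨x*, W⁻¹ x*⟩` (Euclidean norm, written via the dot product). -/
theorem gramian_energy_lower_bound
    (n N : ℕ) (hn : 0 < n) (hN : 0 < N)
    (A : Matrix (Fin n) (Fin n) ℝ) (B : Matrix (Fin n) (Fin N) ℝ)
    (T : ℝ) (hT : 0 < T)
    (W : Matrix (Fin n) (Fin n) ℝ)
    (hW : W = ∫ t in (0:ℝ)..T,
      NormedSpace.exp (t • A) * B * Bᵀ * NormedSpace.exp (t • Aᵀ))
    (hWinv : IsUnit W)
    (u : ℝ → Fin N → ℝ) (hu : Continuous u)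
    (xstar : Fin n → ℝ)
    (hsteer : (∫ s in (0:ℝ)..T,
      (NormedSpace.exp ((T - s) • A) * B).mulVec (u s)) = xstar) :
    (∫ s in (0:ℝ)..T, u s ⬝ᵥ u s) ≥ xstar ⬝ᵥ W⁻¹.mulVec xstar := by
  classical
  -- notation
  set v : Fin n → ℝ := W⁻¹.mulVec xstar with hv
  set M : ℝ → Matrix (Fin n) (Fin N) ℝ :=
    fun s => NormedSpace.exp ((T - s) • A) * B with hM
  set p : ℝ → Fin N → ℝ := fun s => v ᵥ* M s with hp
  -- continuity facts
  have hMe : Continuous fun s : ℝ => NormedSpace.exp ((T - s) • A) := by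
    letI : NormedRing (Matrix (Fin n) (Fin n) ℝ) := Matrix.linftyOpNormedRing
    letI : NormedAlgebra ℝ (Matrix (Fin n) (Fin n) ℝ) := Matrix.linftyOpNormedAlgebra
    exact (@NormedSpace.exp_continuous _ _ (NormedAlgebra.restrictScalars ℚ ℝ _) (FiniteDimensional.complete ℝ _)).comp
      ((continuous_const.sub continuous_id).smul continuous_const)
  have hMent : ∀ (i : Fin n) (j : Fin N), Continuous fun s => M s i j := by
    intro i j
    simp only [hM, Matrix.mul_apply]
    exact continuous_finset_sum _ fun k _ =>
      (((continuous_apply (k : Fin n)).comp ((continuous_apply i).comp hMe)).mul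
        continuous_const)
  have hpc : Continuous p := by
    apply continuous_pi
    intro j
    simp only [hp, vecMul, dotProduct]
    exact continuous_finset_sum _ fun i _ => continuous_const.mul (hMent i j)
  have huj : ∀ j : Fin N, Continuous fun s => u s j := fun j => (continuous_apply j).comp hu
  have hpj : ∀ j : Fin N, Continuous fun s => p s j := fun j => (continuous_apply j).comp hpc
  -- integrability facts
  have hi_uu : IntervalIntegrable (fun s => u s ⬝ᵥ u s) MeasureTheory.volume 0 T := by
    apply Continuous.intervalIntegrable
    simp only [dotProduct]
    exact continuous_finset_sum _ fun j _ => (huj j).mul (huj j)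
  have hi_up : IntervalIntegrable (fun s => u s ⬝ᵥ p s) MeasureTheory.volume 0 T := by
    apply Continuous.intervalIntegrable
    simp only [dotProduct]
    exact continuous_finset_sum _ fun j _ => (huj j).mul (hpj j)
  have hi_pu : IntervalIntegrable (fun s => p s ⬝ᵥ u s) MeasureTheory.volume 0 T := by
    apply Continuous.intervalIntegrable
    simp only [dotProduct]
    exact continuous_finset_sum _ fun j _ => (hpj j).mul (huj j)
  have hi_pp : IntervalIntegrable (fun s => p s ⬝ᵥ p s) MeasureTheory.volume 0 T := by
    apply Continuous.intervalIntegrable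
    simp only [dotProduct]
    exact continuous_finset_sum _ fun j _ => (hpj j).mul (hpj j)
  -- the steering function is integrable
  have hfc : Continuous fun s => (M s).mulVec (u s) := by
    apply continuous_pi
    intro i
    simp only [mulVec, dotProduct]
    exact continuous_finset_sum _ fun j _ => (hMent i j).mul (huj j)
  have hfi : IntervalIntegrable (fun s => (M s).mulVec (u s)) MeasureTheory.volume 0 T :=
    hfc.intervalIntegrable _ _
  -- the dot product with a fixed vector as a continuous linear map
  let L : (Fin n → ℝ) →L[ℝ] ℝ :=
    ∑ i : Fin n, v i • ContinuousLinearMap.proj (R := ℝ) (φ := fun _ : Fin n => ℝ) i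
  have hL : ∀ w : Fin n → ℝ, L w = v ⬝ᵥ w := by
    intro w
    simp [L, dotProduct, ContinuousLinearMap.sum_apply]
  -- ⟨u, p⟩ integral
  have I1 : (∫ s in (0:ℝ)..T, u s ⬝ᵥ p s) = v ⬝ᵥ xstar := by
    have hpt : ∀ s, u s ⬝ᵥ p s = L ((M s).mulVec (u s)) := by
      intro s
      rw [hL]
      simp only [hp]
      rw [dotProduct_comm, dotProduct_mulVec]
    calc (∫ s in (0:ℝ)..T, u s ⬝ᵥ p s)
        = ∫ s in (0:ℝ)..T, L ((M s).mulVec (u s)) := by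
          simp only [hpt]
      _ = L (∫ s in (0:ℝ)..T, (M s).mulVec (u s)) := L.intervalIntegral_comp_comm hfi
      _ = v ⬝ᵥ xstar := by rw [hsteer, hL]
  -- ⟨p, p⟩ integral
  have I2 : (∫ s in (0:ℝ)..T, p s ⬝ᵥ p s) = v ⬝ᵥ W.mulVec v := by
    -- quadratic form as a continuous linear map in the matrix argument
    let Q : Matrix (Fin n) (Fin n) ℝ →L[ℝ] ℝ :=
      ∑ i : Fin n, ∑ j : Fin n, (v i * v j) •
        ((ContinuousLinearMap.proj (R := ℝ) (φ := fun _ : Fin n => ℝ) j).comp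
          (ContinuousLinearMap.proj (R := ℝ)
            (φ := fun _ : Fin n => (Fin n → ℝ)) i))
    have hQ : ∀ G : Matrix (Fin n) (Fin n) ℝ, Q G = v ⬝ᵥ G.mulVec v := by
      intro G
      simp only [Q, dotProduct, mulVec, ContinuousLinearMap.sum_apply,
        ContinuousLinearMap.smul_apply, ContinuousLinearMap.comp_apply,
        ContinuousLinearMap.proj_apply, smul_eq_mul, Finset.mul_sum]
      exact Finset.sum_congr rfl fun i _ => (ContinuousLinearMap.sum_apply _ _ _).trans <| Finset.sum_congr rfl fun j _ => by
        show v i * v j * G i j = v i * (G i j * v j); ring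
    have hGc : Continuous fun s => M s * (M s)ᵀ := by
      apply continuous_pi; intro i; apply continuous_pi; intro j
      simp only [Matrix.mul_apply, transpose_apply]
      exact continuous_finset_sum _ fun k _ => (hMent i k).mul (hMent j k)
    letI : ENormedAddMonoid (Matrix (Fin n) (Fin n) ℝ) := NormedAddGroup.toENormedAddMonoid
    have hGi : IntervalIntegrable (fun s => M s * (M s)ᵀ) MeasureTheory.volume 0 T :=
      hGc.intervalIntegrable _ _
    have hpt : ∀ s, p s ⬝ᵥ p s = Q (M s * (M s)ᵀ) := by
      intro s
      rw [hQ, ← mulVec_mulVec, mulVec_transpose, ← dotProduct_mulVec, dotProduct_comm]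
    have hcov : (∫ s in (0:ℝ)..T, M s * (M s)ᵀ) = W := by
      have hGW : ∀ s : ℝ, M s * (M s)ᵀ =
          NormedSpace.exp ((T - s) • A) * B * Bᵀ *
            NormedSpace.exp ((T - s) • Aᵀ) := by
        intro s
        have he : (NormedSpace.exp ((T - s) • A))ᵀ =
            NormedSpace.exp ((T - s) • Aᵀ) := by
          rw [← Matrix.exp_transpose, transpose_smul]
        simp only [hM, transpose_mul, he, Matrix.mul_assoc]
      calc (∫ s in (0:ℝ)..T, M s * (M s)ᵀ)
          = ∫ s in (0:ℝ)..T, NormedSpace.exp ((T - s) • A) * B * Bᵀ *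
              NormedSpace.exp ((T - s) • Aᵀ) := by
            simp only [hGW]
        _ = ∫ t in (T - T : ℝ)..(T - 0 : ℝ), NormedSpace.exp (t • A) * B * Bᵀ *
              NormedSpace.exp (t • Aᵀ) :=
            intervalIntegral.integral_comp_sub_left (fun t =>
              NormedSpace.exp (t • A) * B * Bᵀ * NormedSpace.exp (t • Aᵀ)) T
        _ = W := by rw [sub_self, sub_zero, hW]
    calc (∫ s in (0:ℝ)..T, p s ⬝ᵥ p s)
        = ∫ s in (0:ℝ)..T, Q (M s * (M s)ᵀ) := by simp only [hpt]
      _ = Q (∫ s in (0:ℝ)..T, M s * (M s)ᵀ) := Q.intervalIntegral_comp_comm hGi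
      _ = v ⬝ᵥ W.mulVec v := by rw [hcov, hQ]
  -- W.mulVec v = xstar
  have hWv : W.mulVec v = xstar := by
    rw [hv, mulVec_mulVec, Matrix.mul_nonsing_inv W ((Matrix.isUnit_iff_isUnit_det W).mp hWinv),
      one_mulVec]
  have I2' : (∫ s in (0:ℝ)..T, p s ⬝ᵥ p s) = v ⬝ᵥ xstar := by rw [I2, hWv]
  -- positivity of the defect integral
  have h0 : (0:ℝ) ≤ ∫ s in (0:ℝ)..T, (u s - p s) ⬝ᵥ (u s - p s) := by
    apply intervalIntegral.integral_nonneg hT.le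
    intro s _
    exact Finset.sum_nonneg fun j _ => mul_self_nonneg _
  -- expand the defect integral
  have hexp : (∫ s in (0:ℝ)..T, (u s - p s) ⬝ᵥ (u s - p s)) =
      (∫ s in (0:ℝ)..T, u s ⬝ᵥ u s) - (∫ s in (0:ℝ)..T, u s ⬝ᵥ p s)
      - ((∫ s in (0:ℝ)..T, p s ⬝ᵥ u s) - (∫ s in (0:ℝ)..T, p s ⬝ᵥ p s)) := by
    rw [← intervalIntegral.integral_sub hi_pu hi_pp,
      ← intervalIntegral.integral_sub hi_uu hi_up,
      ← intervalIntegral.integral_sub (hi_uu.sub hi_up) (hi_pu.sub hi_pp)]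
    congr 1
    funext s
    simp only [sub_dotProduct, dotProduct_sub]
    ring
  have hpu : (∫ s in (0:ℝ)..T, p s ⬝ᵥ u s) = v ⬝ᵥ xstar := by
    rw [← I1]
    congr 1
    funext s
    rw [dotProduct_comm]
  rw [hexp, I1, hpu, I2'] at h0
  have hfin : xstar ⬝ᵥ W⁻¹.mulVec xstar = v ⬝ᵥ xstar := dotProduct_comm _ _
  linarith [h0]
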